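/- Let n, m be positive integers, F an n×n real matrix, G an n×m real matrix, Q a symmetric n×n real matrix, R a symmetric positive-definite m×m real matrix, P a symmetric n×n real matrix satisfying FᵀP + PF + Q = PGR⁻¹GᵀP, and K = −R⁻¹GᵀP. Let f : ℝⁿ × ℝᵐ → ℝⁿ be a function such that (z,u) ↦ f(z,u) − (Fz + Gu) is O(‖(z,u)‖²) as (z,u) → (0,0). Then the function z ↦ 2 f(z, Kz)ᵀ P z + zᵀ(Q + PGR⁻¹GᵀP)z is O(‖z‖³) as z → 0. (That is, along the closed-loop nonlinear dynamics ż = f(z, Kz), the derivative of the Lyapunov candidate zᵀPz equals −zᵀ(Q + PGR⁻¹GᵀP)z up to terms of order ‖z‖³.) -/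

import Mathlib

open Matrix Asymptotics

lemma aux_dot (n k : ℕ) (A B : Matrix (Fin n) (Fin k) ℝ) (z : Fin k → ℝ) :
    (A *ᵥ z) ⬝ᵥ (B *ᵥ z) = z ⬝ᵥ ((Aᵀ * B) *ᵥ z) := by
  rw [← vecMul_transpose, ← dotProduct_mulVec, mulVec_mulVec]

lemma aux_norm_dot (n : ℕ) (v w : Fin n → ℝ) : ‖v ⬝ᵥ w‖ ≤ n * (‖v‖ * ‖w‖) := by
  calc ‖v ⬝ᵥ w‖ ≤ ∑ i, ‖v i * w i‖ := norm_sum_le _ _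
    _ ≤ ∑ _i : Fin n, ‖v‖ * ‖w‖ := by
        refine Finset.sum_le_sum fun i _ => ?_
        rw [norm_mul]
        exact mul_le_mul (norm_le_pi_norm v i) (norm_le_pi_norm w i) (norm_nonneg _) (norm_nonneg _)
    _ = n * (‖v‖ * ‖w‖) := by simp [Finset.sum_const, mul_comm]

theorem lyapunov_derivative_bigO
    (n m : ℕ) (hn : 0 < n) (hm : 0 < m)
    (F Q P : Matrix (Fin n) (Fin n) ℝ)
    (G : Matrix (Fin n) (Fin m) ℝ)
    (R : Matrix (Fin m) (Fin m) ℝ)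
    (hQ : Q.IsSymm) (hR : R.IsSymm) (hRpd : R.PosDef) (hP : P.IsSymm)
    (hARE : Fᵀ * P + P * F + Q = P * G * R⁻¹ * Gᵀ * P)
    (K : Matrix (Fin m) (Fin n) ℝ) (hK : K = -(R⁻¹ * Gᵀ * P))
    (f : (Fin n → ℝ) × (Fin m → ℝ) → Fin n → ℝ)
    (hf : (fun w : (Fin n → ℝ) × (Fin m → ℝ) =>
        f w - (F.mulVec w.1 + G.mulVec w.2)) =O[nhds 0] fun w => ‖w‖ ^ 2) :
    (fun z : Fin n → ℝ =>
        2 * (f (z, K.mulVec z) ⬝ᵥ P.mulVec z)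
          + z ⬝ᵥ ((Q + P * G * R⁻¹ * Gᵀ * P).mulVec z))
      =O[nhds 0] fun z => ‖z‖ ^ 3 := by
  set M : Matrix (Fin n) (Fin n) ℝ := P * G * R⁻¹ * Gᵀ * P with hM
  set g : (Fin n → ℝ) × (Fin m → ℝ) → Fin n → ℝ :=
    fun w => f w - (F.mulVec w.1 + G.mulVec w.2) with hg
  -- key pointwise identity
  have hKt : Kᵀ = -(P * G * R⁻¹) := by
    rw [hK, transpose_neg, transpose_mul, transpose_mul, transpose_transpose,
      R.transpose_nonsing_inv, hR.eq, hP.eq, Matrix.mul_assoc]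
  have key : ∀ z : Fin n → ℝ,
      2 * (f (z, K.mulVec z) ⬝ᵥ P.mulVec z) + z ⬝ᵥ ((Q + M).mulVec z)
        = 2 * (g (z, K.mulVec z) ⬝ᵥ P.mulVec z) := by
    intro z
    have e1 : (F *ᵥ z) ⬝ᵥ (P *ᵥ z) = z ⬝ᵥ ((Fᵀ * P) *ᵥ z) := aux_dot n n F P z
    have e2 : (G *ᵥ (K *ᵥ z)) ⬝ᵥ (P *ᵥ z) = - (z ⬝ᵥ (M *ᵥ z)) := by
      rw [mulVec_mulVec, aux_dot, transpose_mul, hKt]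
      simp only [neg_mul, Matrix.neg_mul, Matrix.mul_assoc, neg_mulVec, dotProduct_neg]
      rw [hM]
      simp [Matrix.mul_assoc]
    have e3 : z ⬝ᵥ ((Fᵀ * P) *ᵥ z) = z ⬝ᵥ ((P * F) *ᵥ z) := by
      rw [← aux_dot, dotProduct_comm, aux_dot, hP.eq]
    have e4 : z ⬝ᵥ ((Fᵀ * P + (P * F + Q)) *ᵥ z) = z ⬝ᵥ (M *ᵥ z) := by
      rw [← add_assoc, hARE]
    have hgz : g (z, K *ᵥ z) ⬝ᵥ (P *ᵥ z)
        = f (z, K *ᵥ z) ⬝ᵥ (P *ᵥ z) - (F *ᵥ z) ⬝ᵥ (P *ᵥ z) - (G *ᵥ (K *ᵥ z)) ⬝ᵥ (P *ᵥ z) := by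
      simp [hg, sub_dotProduct, add_dotProduct, sub_sub]
    rw [hgz, e1, e2]
    simp only [add_mulVec, dotProduct_add] at e4 ⊢
    rw [e3] at e4
    linarith [e4]
  -- asymptotics
  have := Matrix.mulVecLin K
  set L : (Fin n → ℝ) →L[ℝ] (Fin n → ℝ) × (Fin m → ℝ) :=
    (ContinuousLinearMap.id ℝ (Fin n → ℝ)).prod
      (LinearMap.toContinuousLinearMap (Matrix.mulVecLin K)) with hL
  have hL0 : Filter.Tendsto L (nhds 0) (nhds 0) := by
    have := L.continuous.tendsto 0
    rwa [map_zero] at this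
  have hgL : (fun z => g (L z)) =O[nhds 0] fun z => ‖L z‖ ^ 2 := hf.comp_tendsto hL0
  have hLz : (fun z => ‖L z‖ ^ 2) =O[nhds 0] fun z : Fin n → ℝ => ‖z‖ ^ 2 := by
    have h := (L.isBigO_id (nhds 0)).norm_norm
    calc (fun z => ‖L z‖ ^ 2) =O[nhds 0] (fun z : Fin n → ℝ => ‖z‖ * ‖z‖) := by
          simpa [pow_two] using h.mul h
      _ =O[nhds 0] fun z : Fin n → ℝ => ‖z‖ ^ 2 := by
          apply Asymptotics.isBigO_of_le
          intro z; simp [pow_two, abs_mul]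
  have hgO : (fun z => g (z, K *ᵥ z)) =O[nhds 0] fun z : Fin n → ℝ => ‖z‖ ^ 2 := by
    have := hgL.trans hLz
    convert this using 2
    rfl
  have hPz : (fun z : Fin n → ℝ => P *ᵥ z) =O[nhds 0] fun z => z :=
    (LinearMap.toContinuousLinearMap (Matrix.mulVecLin P)).isBigO_id (nhds 0)
  have hdot : (fun z : Fin n → ℝ => g (z, K *ᵥ z) ⬝ᵥ (P *ᵥ z))
      =O[nhds 0] fun z => ‖g (z, K *ᵥ z)‖ * ‖P *ᵥ z‖ := by
    apply Asymptotics.IsBigO.of_bound n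
    filter_upwards with z
    simpa [norm_mul, abs_of_nonneg, mul_nonneg, norm_nonneg] using aux_norm_dot n _ (P *ᵥ z)
  have hmul : (fun z : Fin n → ℝ => ‖g (z, K *ᵥ z)‖ * ‖P *ᵥ z‖)
      =O[nhds 0] fun z => ‖z‖ ^ 3 := by
    have := (hgO.norm_left.mul hPz.norm_norm)
    refine this.trans (Asymptotics.isBigO_of_le _ fun z => ?_)
    simp [pow_succ, pow_two, abs_mul, abs_of_nonneg, mul_assoc]
  have final : (fun z : Fin n → ℝ => 2 * (g (z, K *ᵥ z) ⬝ᵥ (P *ᵥ z)))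
      =O[nhds 0] fun z => ‖z‖ ^ 3 := (hdot.trans hmul).const_mul_left 2
  refine final.congr' ?_ (Filter.EventuallyEq.refl _ _)
  filter_upwards with z
  exact (key z).symm
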